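/- arXiv:2002.00057 — 2 statements merged into one kernel-verified Lean document; each statement's English description precedes it below -/
import Mathlib

section
/- There exists an absolute constant C > 0 such that for every integer k ≥ 2 and every L > 0 there is a real polynomial N' of degree at most k−1 with the following property: for every even n ≥ 2, every D > 0, every invertible matrix A ∈ ℝ^{n×n} of the form A = [[0, M], [−Mᵀ, 0]] with ‖A‖_σ ≤ L, and every b ∈ ℝ^n with ‖A⁻¹b‖ ≤ D, the point z = N'(A)·b satisfies ‖Az + b‖² ≤ C·L²D²/k². -/
open Matrix

/-- The spectral (operator) norm of a real matrix. -/
noncomputable def specNorm {ι : Type*} [Fintype ι] [DecidableEq ι] (A : Matrix ι ι ℝ) : ℝ :=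
  ‖Matrix.toEuclideanCLM (𝕜 := ℝ) A‖

/-- The Euclidean norm of a real vector. -/
noncomputable def euclidNorm {ι : Type*} [Fintype ι] (v : ι → ℝ) : ℝ := Real.sqrt (∑ i, v i ^ 2)

set_option linter.unusedSectionVars false
set_option maxHeartbeats 1000000

namespace LbAux

open Polynomial Finset

lemma sum_range_split (f : ℕ → ℝ) (m : ℕ) :
    ∑ i ∈ range (2 * m), f i = ∑ j ∈ range m, (f (2 * j) + f (2 * j + 1)) := by
  induction m with
  | zero => simp
  | succ m ih =>
      have h : 2 * (m + 1) = 2 * m + 1 + 1 := by ring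
      rw [h, Finset.sum_range_succ, Finset.sum_range_succ, ih, Finset.sum_range_succ]
      ring

lemma T_coeff_zero : ∀ n : ℕ, ∀ j : ℕ, (n < j ∨ j % 2 ≠ n % 2) →
    (Polynomial.Chebyshev.T ℝ (n : ℤ)).coeff j = 0 := by
  intro n
  induction n using Nat.twoStepInduction with
  | zero =>
      intro j hj
      have hj0 : j ≠ 0 := by omega
      simp [Polynomial.Chebyshev.T_zero, Polynomial.coeff_one, hj0, Ne.symm hj0]
  | one =>
      intro j hj
      have hj1 : j ≠ 1 := by omega
      simp [Polynomial.Chebyshev.T_one, Polynomial.coeff_X, hj1, Ne.symm hj1]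
  | more n ih ih1 =>
      intro j hj
      have hcast : ((n + 2 : ℕ) : ℤ) = (n : ℤ) + 2 := by push_cast; ring
      have hc1 : ((n + 1 : ℕ) : ℤ) = (n : ℤ) + 1 := by push_cast; ring
      rw [hcast, Polynomial.Chebyshev.T_add_two, Polynomial.coeff_sub]
      have h2 : (2 * Polynomial.X * Polynomial.Chebyshev.T ℝ ((n : ℤ) + 1)) =
          Polynomial.C 2 * (Polynomial.X * Polynomial.Chebyshev.T ℝ ((n : ℤ) + 1)) := by
        rw [map_ofNat, mul_assoc]
      rw [h2, Polynomial.coeff_C_mul]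
      rcases j with _ | j
      · rw [Polynomial.mul_coeff_zero, Polynomial.coeff_X_zero, zero_mul, mul_zero, zero_sub,
          neg_eq_zero]
        exact ih 0 (Or.inr (by omega))
      · rw [Polynomial.coeff_X_mul, ← hc1]
        rw [ih1 j (by omega), ih (j + 1) (by omega)]
        ring

lemma U_eval_zero : ∀ m : ℕ, (Polynomial.Chebyshev.U ℝ (2 * (m : ℤ))).eval 0 = (-1 : ℝ) ^ m := by
  intro m
  induction m with
  | zero => simp [Polynomial.Chebyshev.U_zero]
  | succ m ih =>
      have h : (2 * ((m : ℤ) + 1)) = (2 * (m : ℤ)) + 2 := by ring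
      push_cast
      rw [h, Polynomial.Chebyshev.U_add_two]
      simp only [Polynomial.eval_sub, Polynomial.eval_mul, Polynomial.eval_X, mul_zero, zero_mul,
        Polynomial.eval_ofNat]
      rw [ih]
      ring

lemma T_coeff_one (m : ℕ) :
    (Polynomial.Chebyshev.T ℝ (2 * (m : ℤ) + 1)).coeff 1 = (-1 : ℝ) ^ m * (2 * (m : ℝ) + 1) := by
  have hd := Polynomial.Chebyshev.T_derivative_eq_U (R := ℝ) (2 * (m : ℤ) + 1)
  have h1 : (2 * (m : ℤ) + 1) - 1 = 2 * (m : ℤ) := by ring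
  rw [h1] at hd
  have h2 : (Polynomial.Chebyshev.T ℝ (2 * (m : ℤ) + 1)).coeff 1
      = (Polynomial.derivative (Polynomial.Chebyshev.T ℝ (2 * (m : ℤ) + 1))).coeff 0 := by
    rw [Polynomial.coeff_derivative]
    norm_num
  rw [h2, hd, Polynomial.coeff_zero_eq_eval_zero, Polynomial.eval_mul, Polynomial.eval_intCast,
    U_eval_zero m]
  push_cast
  ring

lemma T_abs_le (n : ℤ) (x : ℝ) (hx : |x| ≤ 1) : |(Polynomial.Chebyshev.T ℝ n).eval x| ≤ 1 := by
  obtain ⟨h1, h2⟩ := abs_le.mp hx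
  have h := Polynomial.Chebyshev.T_real_cos (θ := Real.arccos x) (n := n)
  rw [Real.cos_arccos h1 h2] at h
  rw [h]
  exact Real.abs_cos_le_one _

lemma T_repr (m : ℕ) (x : ℝ) :
    (Polynomial.Chebyshev.T ℝ (2 * (m : ℤ) + 1)).eval x
      = ∑ j ∈ range (m + 1),
          (Polynomial.Chebyshev.T ℝ (2 * (m : ℤ) + 1)).coeff (2 * j + 1) * x ^ (2 * j + 1) := by
  set p := Polynomial.Chebyshev.T ℝ (2 * (m : ℤ) + 1) with hp
  have hcast : ((2 * m + 1 : ℕ) : ℤ) = 2 * (m : ℤ) + 1 := by push_cast; ring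
  have hcoeff : ∀ j : ℕ, (2 * m + 1 < j ∨ j % 2 ≠ 1) → p.coeff j = 0 := by
    intro j hj
    rw [hp, ← hcast]
    exact T_coeff_zero (2 * m + 1) j (by omega)
  have hdeg : p.natDegree < 2 * (m + 1) := by
    have : p.natDegree ≤ 2 * m + 1 := Polynomial.natDegree_le_iff_coeff_eq_zero.mpr
      (fun N hN => hcoeff N (Or.inl hN))
    omega
  rw [Polynomial.eval_eq_sum_range' hdeg, sum_range_split]
  refine Finset.sum_congr rfl fun j _ => ?_
  rw [hcoeff (2 * j) (Or.inr (by omega))]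
  ring


variable {ι : Type*} [Fintype ι] [DecidableEq ι]

lemma conj_pow (U B V : Matrix ι ι ℝ) (hUV : U * V = 1) (hVU : V * U = 1) (k : ℕ) :
    (U * B * V) ^ k = U * B ^ k * V := by
  induction k with
  | zero => simp [hUV]
  | succ k ih =>
      have hins : ∀ t : Matrix ι ι ℝ, V * (U * t) = t := fun t => by
        rw [← mul_assoc, hVU, one_mul]
      rw [pow_succ, ih, pow_succ]
      simp only [mul_assoc, hins]

lemma aeval_conj (U B V : Matrix ι ι ℝ) (hUV : U * V = 1) (hVU : V * U = 1) (p : ℝ[X]) :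
    Polynomial.aeval (U * B * V) p = U * (Polynomial.aeval B p) * V := by
  induction p using Polynomial.induction_on' with
  | add p q hp hq => rw [map_add, map_add, hp, hq, mul_add, add_mul]
  | monomial k a =>
      rw [Polynomial.aeval_monomial, Polynomial.aeval_monomial, conj_pow U B V hUV hVU,
        ← Algebra.smul_def, ← Algebra.smul_def, Matrix.mul_smul, Matrix.smul_mul]

lemma aeval_diagonal (d : ι → ℝ) (p : ℝ[X]) :
    Polynomial.aeval (Matrix.diagonal d) p = Matrix.diagonal (fun i => p.eval (d i)) := by
  induction p using Polynomial.induction_on' with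
  | add p q hp hq =>
      rw [map_add, hp, hq, Matrix.diagonal_add]
      refine congrArg Matrix.diagonal ?_
      funext i
      simp [Polynomial.eval_add]
  | monomial k a =>
      rw [Polynomial.aeval_monomial, Matrix.algebraMap_eq_diagonal, Matrix.diagonal_pow,
        Matrix.diagonal_mul_diagonal]
      congr 1
      funext i
      simp [Polynomial.eval_monomial]

lemma aeval_transpose (S : Matrix ι ι ℝ) (p : ℝ[X]) :
    (Polynomial.aeval S p)ᵀ = Polynomial.aeval Sᵀ p := by
  induction p using Polynomial.induction_on' with
  | add p q hp hq => rw [map_add, map_add, Matrix.transpose_add, hp, hq]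
  | monomial k a =>
      rw [Polynomial.aeval_monomial, Polynomial.aeval_monomial, ← Algebra.smul_def,
        ← Algebra.smul_def, Matrix.transpose_smul, Matrix.transpose_pow]

lemma euclidNorm_sq (v : ι → ℝ) : euclidNorm v ^ 2 = v ⬝ᵥ v := by
  rw [euclidNorm, Real.sq_sqrt (by positivity)]
  simp [dotProduct, sq]

lemma dot_self_mulVec (Mm : Matrix ι ι ℝ) (x : ι → ℝ) :
    (Mm *ᵥ x) ⬝ᵥ (Mm *ᵥ x) = x ⬝ᵥ ((Mmᵀ * Mm) *ᵥ x) := by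
  rw [← Matrix.mulVec_mulVec, Matrix.dotProduct_mulVec x, Matrix.vecMul_transpose]

lemma quad_le (S : Matrix ι ι ℝ) (hS : S.IsHermitian) (p : ℝ[X]) (c : ℝ)
    (h : ∀ i, p.eval (hS.eigenvalues i) ≤ c) (x : ι → ℝ) :
    x ⬝ᵥ ((Polynomial.aeval S p : Matrix ι ι ℝ) *ᵥ x) ≤ c * (x ⬝ᵥ x) := by
  set U : Matrix ι ι ℝ := (Matrix.IsHermitian.eigenvectorUnitary hS : Matrix ι ι ℝ) with hUdef
  have hU1 : U * star U = 1 :=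
    Unitary.mul_star_self_of_mem (Matrix.IsHermitian.eigenvectorUnitary hS).prop
  have hU2 : star U * U = 1 :=
    Unitary.star_mul_self_of_mem (Matrix.IsHermitian.eigenvectorUnitary hS).prop
  have hst : star U = Uᵀ := by
    rw [Matrix.star_eq_conjTranspose, Matrix.conjTranspose_eq_transpose_of_trivial]
  have hspec : S = U * Matrix.diagonal (hS.eigenvalues) * star U := by
    have h := hS.spectral_theorem
    rwa [RCLike.ofReal_real_eq_id, Function.id_comp] at h
  have haev : Polynomial.aeval S p
      = U * Matrix.diagonal (fun i => p.eval (hS.eigenvalues i)) * star U := by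
    conv_lhs => rw [hspec]
    rw [aeval_conj U _ (star U) hU1 hU2, aeval_diagonal]
  have hyy : (Uᵀ *ᵥ x) ⬝ᵥ (Uᵀ *ᵥ x) = x ⬝ᵥ x := by
    rw [dot_self_mulVec, Matrix.transpose_transpose, ← hst, hU1, Matrix.one_mulVec]
  set y := Uᵀ *ᵥ x with hy
  rw [haev, hst]
  have hrw : (U * Matrix.diagonal (fun i => p.eval (hS.eigenvalues i)) * Uᵀ) *ᵥ x
      = U *ᵥ (Matrix.diagonal (fun i => p.eval (hS.eigenvalues i)) *ᵥ y) := by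
    rw [Matrix.mulVec_mulVec, Matrix.mulVec_mulVec, Matrix.mul_assoc]
  rw [hrw, Matrix.dotProduct_mulVec x U,
    show x ᵥ* U = y by rw [hy, Matrix.mulVec_transpose]]
  have hterm : y ⬝ᵥ (Matrix.diagonal (fun i => p.eval (hS.eigenvalues i)) *ᵥ y)
      = ∑ i, p.eval (hS.eigenvalues i) * y i ^ 2 := by
    simp [dotProduct, Matrix.mulVec_diagonal, sq]
    exact Finset.sum_congr rfl fun i _ => by ring
  rw [hterm, ← hyy]
  have : y ⬝ᵥ y = ∑ i, y i ^ 2 := by simp [dotProduct, sq]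
  rw [this, Finset.mul_sum]
  exact Finset.sum_le_sum fun i _ =>
    mul_le_mul_of_nonneg_right (h i) (sq_nonneg _)

lemma eig_abs_le (S : Matrix ι ι ℝ) (hS : S.IsHermitian) (i : ι) :
    |hS.eigenvalues i| ≤ specNorm S := by
  have hv := hS.mulVec_eigenvectorBasis i
  set v : EuclideanSpace ℝ ι := hS.eigenvectorBasis i with hvdef
  have hnv : ‖v‖ = 1 := hS.eigenvectorBasis.orthonormal.1 i
  have happ : Matrix.toEuclideanCLM (𝕜 := ℝ) S v = hS.eigenvalues i • v := by
    apply (WithLp.equiv 2 (ι → ℝ)).injective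
    rw [WithLp.equiv_apply, WithLp.equiv_apply, Matrix.ofLp_toEuclideanCLM]
    rw [show WithLp.ofLp v = ⇑(hS.eigenvectorBasis i) from rfl]
    rw [hv]
    rfl
  have h1 : |hS.eigenvalues i| = ‖Matrix.toEuclideanCLM (𝕜 := ℝ) S v‖ := by
    rw [happ, norm_smul, hnv, Real.norm_eq_abs, mul_one]
  rw [h1, specNorm]
  calc ‖Matrix.toEuclideanCLM (𝕜 := ℝ) S v‖
      ≤ ‖Matrix.toEuclideanCLM (𝕜 := ℝ) S‖ * ‖v‖ := (Matrix.toEuclideanCLM (𝕜 := ℝ) S).le_opNorm v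
    _ = ‖Matrix.toEuclideanCLM (𝕜 := ℝ) S‖ := by rw [hnv, mul_one]

lemma specNorm_neg_mul_self (A : Matrix ι ι ℝ) :
    specNorm (-(A * A)) ≤ specNorm A * specNorm A := by
  rw [specNorm, specNorm, map_neg, _root_.map_mul, norm_neg]
  exact norm_mul_le _ _


end LbAux

open LbAux Polynomial Finset

/-- Tightness of the dependence on the degree `k`: there is an absolute constant `C > 0`
such that for each `k ≥ 2` and `L > 0` there is a real polynomial `N'` of degree at most
`k − 1` with the property that for every even `n ≥ 2`, every `D > 0`, every invertible
`A = [[0, M], [−Mᵀ, 0]]` with `‖A‖_σ ≤ L`, and every `b` with `‖A⁻¹b‖ ≤ D`, the point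
`z = N'(A) b` satisfies `‖Az + b‖² ≤ C L² D² / k²`. -/
theorem lb_tight_in_k :
    ∃ C : ℝ, 0 < C ∧
      ∀ k : ℕ, 2 ≤ k → ∀ L : ℝ, 0 < L →
        ∃ N' : Polynomial ℝ, N'.natDegree ≤ k - 1 ∧
          ∀ n : ℕ, 2 ≤ n → Even n →
            ∀ D : ℝ, 0 < D →
              ∀ (M : Matrix (Fin (n / 2)) (Fin (n / 2)) ℝ)
                (A : Matrix (Fin (n / 2) ⊕ Fin (n / 2)) (Fin (n / 2) ⊕ Fin (n / 2)) ℝ),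
                A = Matrix.fromBlocks 0 M (-Mᵀ) 0 →
                IsUnit A →
                specNorm A ≤ L →
                ∀ b : Fin (n / 2) ⊕ Fin (n / 2) → ℝ,
                  euclidNorm (A⁻¹ *ᵥ b) ≤ D →
                  euclidNorm (A *ᵥ (Polynomial.aeval A N' *ᵥ b) + b) ^ 2
                    ≤ C * L ^ 2 * D ^ 2 / k ^ 2 := by
  
  refine ⟨4, by norm_num, ?_⟩
  intro k hk L hL
  set m : ℕ := (k - 1) / 2 with hm
  set T : Polynomial ℝ := Polynomial.Chebyshev.T ℝ (2 * (m : ℤ) + 1) with hT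
  set a : ℕ → ℝ := fun j => (-1 : ℝ) ^ m * T.coeff (2 * j + 1) * (L⁻¹) ^ (2 * j) / (2 * (m : ℝ) + 1)
    with ha
  set G : Polynomial ℝ := ∑ j ∈ Finset.range (m + 1), Polynomial.C (a j) * Polynomial.X ^ j
    with hG
  set N : Polynomial ℝ := ∑ j ∈ Finset.range m,
      Polynomial.C ((-1 : ℝ) ^ (j + 1) * a (j + 1)) * Polynomial.X ^ (2 * j + 1) with hN
  set q : Polynomial ℝ := ∑ j ∈ Finset.range (m + 1),
      Polynomial.C ((-1 : ℝ) ^ j * a j) * Polynomial.X ^ (2 * j + 1) with hqdef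
  have hDpos : (0 : ℝ) < 2 * (m : ℝ) + 1 := by positivity
  have ha0 : a 0 = 1 := by
    rw [ha]
    simp only [mul_zero, pow_zero, mul_one]
    rw [T_coeff_one m, ← mul_assoc, ← mul_pow]
    norm_num
    exact hDpos.ne'
  -- Chebyshev bound
  have hGbound : ∀ μ : ℝ, 0 ≤ μ → μ ≤ L → |μ * G.eval (μ ^ 2)| ≤ L / (2 * (m : ℝ) + 1) := by
    intro μ hμ0 hμL
    have habs : |μ / L| ≤ 1 := by
      rw [abs_of_nonneg (div_nonneg hμ0 hL.le)]
      exact div_le_one_of_le₀ hμL hL.le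
    have hTb := T_abs_le (2 * (m : ℤ) + 1) (μ / L) habs
    have hLL : L * L⁻¹ = 1 := mul_inv_cancel₀ hL.ne'
    have hev : μ * G.eval (μ ^ 2)
        = ((-1 : ℝ) ^ m * L / (2 * (m : ℝ) + 1)) * T.eval (μ / L) := by
      rw [hG, Polynomial.eval_finset_sum, hT, T_repr m (μ / L), Finset.mul_sum, Finset.mul_sum]
      refine Finset.sum_congr rfl fun j _ => ?_
      rw [Polynomial.eval_mul, Polynomial.eval_C, Polynomial.eval_pow, Polynomial.eval_X, ha]
      have hpow : ((μ ^ 2) ^ j) = μ ^ (2 * j) := by rw [← pow_mul]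
      have hdiv : (μ / L) ^ (2 * j + 1) = μ ^ (2 * j) * μ * ((L⁻¹) ^ (2 * j) * L⁻¹) := by
        rw [div_eq_mul_inv, mul_pow, pow_succ μ, pow_succ L⁻¹]
      rw [hpow, hdiv]
      simp only []
      linear_combination (-((-1 : ℝ) ^ m * (Polynomial.Chebyshev.T ℝ (2 * (m : ℤ) + 1)).coeff (2 * j + 1)
        * (L⁻¹) ^ (2 * j) * μ ^ (2 * j) * μ) / (2 * (m : ℝ) + 1)) * hLL
    rw [hev, abs_mul, abs_div, abs_mul, abs_pow, abs_neg, abs_one, one_pow, one_mul,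
      abs_of_pos hL, abs_of_pos hDpos]
    calc L / (2 * (m : ℝ) + 1) * |T.eval (μ / L)| ≤ L / (2 * (m : ℝ) + 1) * 1 :=
          mul_le_mul_of_nonneg_left hTb (by positivity)
      _ = L / (2 * (m : ℝ) + 1) := mul_one _
  -- the polynomial identity
  have hq : Polynomial.X ^ 2 * N + Polynomial.X = q := by
    rw [hqdef, Finset.sum_range_succ']
    have h0 : Polynomial.C ((-1 : ℝ) ^ 0 * a 0) * Polynomial.X ^ (2 * 0 + 1) = Polynomial.X := by
      simp [ha0]
    rw [h0]
    congr 1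
    rw [hN, Finset.mul_sum]
    refine Finset.sum_congr rfl fun j _ => ?_
    have he : 2 * (j + 1) + 1 = (2 * j + 1) + 2 := by omega
    rw [he, pow_add]
    ring
  refine ⟨N, ?_, ?_⟩
  · -- degree bound
    refine Polynomial.natDegree_sum_le_of_forall_le _ _ fun j hj => ?_
    refine le_trans (Polynomial.natDegree_C_mul_le _ _) ?_
    refine le_trans (Polynomial.natDegree_X_pow_le _) ?_
    have hj' : j < m := Finset.mem_range.mp hj
    omega
  intro nn hnn hnev D hD M A hAblock hAunit hAnorm b hb
  have hdet : IsUnit A.det := (Matrix.isUnit_iff_isUnit_det A).mp hAunit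
  have hAt : Aᵀ = -A := by
    rw [hAblock]
    simp [Matrix.fromBlocks_transpose, Matrix.fromBlocks_neg]
  set S : Matrix _ _ ℝ := -(A * A) with hS
  have hSt : Sᵀ = S := by
    rw [hS, Matrix.transpose_neg, Matrix.transpose_mul, hAt, neg_mul_neg]
  have hSsym : S.IsHermitian := by
    rw [Matrix.IsHermitian, Matrix.conjTranspose_eq_transpose_of_trivial, hSt]
  have hSpsd : S.PosSemidef := by
    have h : S = A * Aᴴ := by
      rw [Matrix.conjTranspose_eq_transpose_of_trivial, hAt, Matrix.mul_neg, hS]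
    rw [h]
    exact Matrix.posSemidef_self_mul_conjTranspose A
  -- commutation
  have hASG : A * Polynomial.aeval S G = Polynomial.aeval S G * A := by
    rw [hG, map_sum, Finset.mul_sum, Finset.sum_mul]
    refine Finset.sum_congr rfl fun j _ => ?_
    rw [Polynomial.aeval_mul, Polynomial.aeval_C, Polynomial.aeval_X_pow, ← Algebra.smul_def,
      mul_smul_comm, smul_mul_assoc]
    congr 1
    have hc : Commute A S := by
      rw [hS]
      exact ((Commute.refl A).mul_right (Commute.refl A)).neg_right
    exact (hc.pow_right j).eq
  -- matrix identity: aeval A q = aeval S G * A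
  have hP : Polynomial.aeval A q = Polynomial.aeval S G * A := by
    rw [hqdef, hG, map_sum, map_sum, Finset.sum_mul]
    refine Finset.sum_congr rfl fun j _ => ?_
    rw [Polynomial.aeval_mul, Polynomial.aeval_mul, Polynomial.aeval_C, Polynomial.aeval_C, Polynomial.aeval_X_pow,
      Polynomial.aeval_X_pow, ← Algebra.smul_def, ← Algebra.smul_def]
    have hSj : S ^ j = ((-1 : ℝ) ^ j) • A ^ (2 * j) := by
      rw [hS, ← neg_one_smul ℝ (A * A), _root_.smul_pow, ← sq, ← pow_mul]
    rw [hSj, smul_smul, smul_mul_assoc, ← pow_succ, mul_comm (a j)]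
  -- Gram matrix identity
  have c1 : Commute A (Polynomial.aeval S G) := hASG
  have c3 : Commute (A * A) (Polynomial.aeval S G * Polynomial.aeval S G) :=
    (Commute.mul_left c1 c1).mul_right (Commute.mul_left c1 c1)
  have hPt : (Polynomial.aeval S G)ᵀ = Polynomial.aeval S G := by
    rw [aeval_transpose, hSt]
  have key : A * Polynomial.aeval S G * (Polynomial.aeval S G * A)
      = Polynomial.aeval S G * Polynomial.aeval S G * (A * A) := by
    rw [mul_assoc, ← mul_assoc (Polynomial.aeval S G) (Polynomial.aeval S G) A, ← mul_assoc,
      (c1.mul_right c1).eq, mul_assoc]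
  have hGram : (Polynomial.aeval S G * A)ᵀ * (Polynomial.aeval S G * A)
      = Polynomial.aeval S (Polynomial.X * G ^ 2) := by
    rw [Matrix.transpose_mul, hPt, hAt, Polynomial.aeval_mul, Polynomial.aeval_X, map_pow,
      neg_mul, neg_mul, key, sq, hS]
    rw [neg_mul, c3.eq]
  -- vector side
  set x : _ → ℝ := A⁻¹ *ᵥ b with hx
  have hbx : A *ᵥ x = b := by
    rw [hx, Matrix.mulVec_mulVec, Matrix.mul_nonsing_inv A hdet, Matrix.one_mulVec]
  have hAN : A * Polynomial.aeval A N = Polynomial.aeval A N * A := by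
    rw [show A * Polynomial.aeval A N = Polynomial.aeval A (Polynomial.X * N) by
        rw [Polynomial.aeval_mul, Polynomial.aeval_X],
      show Polynomial.aeval A N * A = Polynomial.aeval A (N * Polynomial.X) by
        rw [Polynomial.aeval_mul, Polynomial.aeval_X],
      mul_comm Polynomial.X N]
  have hw : A *ᵥ (Polynomial.aeval A N *ᵥ b) + b = (Polynomial.aeval S G * A) *ᵥ x := by
    rw [← hP, ← hq, _root_.map_add, Polynomial.aeval_mul, Polynomial.aeval_X_pow,
      Polynomial.aeval_X, Matrix.add_mulVec, hbx]
    have hmm : A * Polynomial.aeval A N * A = A ^ 2 * Polynomial.aeval A N := by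
      rw [sq, mul_assoc A A, hAN, ← mul_assoc, hAN]
    rw [← hbx, Matrix.mulVec_mulVec, Matrix.mulVec_mulVec, hmm]
  -- spectral estimate
  have hmain : euclidNorm (A *ᵥ (Polynomial.aeval A N *ᵥ b) + b) ^ 2
      ≤ (L / (2 * (m : ℝ) + 1)) ^ 2 * (x ⬝ᵥ x) := by
    rw [hw, euclidNorm_sq, dot_self_mulVec, hGram]
    refine quad_le S hSsym _ _ (fun i => ?_) x
    have hs0 : 0 ≤ hSsym.eigenvalues i := hSpsd.eigenvalues_nonneg i
    have hsL : hSsym.eigenvalues i ≤ L ^ 2 := by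
      have h1 := eig_abs_le S hSsym i
      have h2 : specNorm S ≤ L * L := by
        refine le_trans ?_
          (mul_le_mul hAnorm hAnorm (norm_nonneg _) (le_trans (norm_nonneg _) hAnorm))
        rw [hS]; exact specNorm_neg_mul_self A
      nlinarith [le_abs_self (hSsym.eigenvalues i)]
    rw [Polynomial.eval_mul, Polynomial.eval_pow, Polynomial.eval_X]
    set s : ℝ := hSsym.eigenvalues i with hsdef
    set μ : ℝ := Real.sqrt s with hμ
    have hμ2 : μ ^ 2 = s := Real.sq_sqrt hs0
    have hμL : μ ≤ L := by
      rw [hμ, show L = Real.sqrt (L ^ 2) by rw [Real.sqrt_sq hL.le]]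
      exact Real.sqrt_le_sqrt hsL
    have hkey := hGbound μ (Real.sqrt_nonneg s) hμL
    have hrw : s * (G.eval s) ^ 2 = (μ * G.eval (μ ^ 2)) ^ 2 := by rw [mul_pow, hμ2]
    rw [hrw, ← sq_abs]
    exact pow_le_pow_left₀ (abs_nonneg _) hkey 2
  have hx0 : 0 ≤ euclidNorm x := Real.sqrt_nonneg _
  have hxD : x ⬝ᵥ x ≤ D ^ 2 := by
    rw [← euclidNorm_sq]
    exact pow_le_pow_left₀ hx0 hb 2
  have hk2 : (k : ℝ) ≤ 2 * (2 * (m : ℝ) + 1) := by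
    have hnat : k ≤ 2 * (2 * m + 1) := by omega
    calc (k : ℝ) ≤ ((2 * (2 * m + 1) : ℕ) : ℝ) := by exact_mod_cast hnat
      _ = 2 * (2 * (m : ℝ) + 1) := by push_cast; ring
  have hfin : (L / (2 * (m : ℝ) + 1)) ^ 2 * D ^ 2 ≤ 4 * L ^ 2 * D ^ 2 / (k : ℝ) ^ 2 := by
    have hk0 : (0 : ℝ) < (k : ℝ) := by
      have : 0 < k := by omega
      exact_mod_cast this
    have hksq : (k : ℝ) ^ 2 ≤ (2 * (2 * (m : ℝ) + 1)) ^ 2 :=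
      pow_le_pow_left₀ hk0.le hk2 2
    rw [div_pow, div_mul_eq_mul_div, div_le_div_iff₀ (by positivity) (by positivity)]
    calc L ^ 2 * D ^ 2 * (k : ℝ) ^ 2 ≤ L ^ 2 * D ^ 2 * (2 * (2 * (m : ℝ) + 1)) ^ 2 :=
          mul_le_mul_of_nonneg_left hksq (by positivity)
      _ = 4 * L ^ 2 * D ^ 2 * (2 * (m : ℝ) + 1) ^ 2 := by ring
  calc euclidNorm (A *ᵥ (Polynomial.aeval A N *ᵥ b) + b) ^ 2
      ≤ (L / (2 * (m : ℝ) + 1)) ^ 2 * (x ⬝ᵥ x) := hmain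
    _ ≤ (L / (2 * (m : ℝ) + 1)) ^ 2 * D ^ 2 :=
        mul_le_mul_of_nonneg_left hxD (by positivity)
    _ ≤ 4 * L ^ 2 * D ^ 2 / (k : ℝ) ^ 2 := hfin
end

section
/- Fix an even integer n ≥ 2, reals L, D > 0, an integer T ≥ 2, and any sequence of step sizes η : ℕ → ℝ with η_t ∈ (0, 1/L) for all t. Then there exist a matrix M ∈ ℝ^{(n/2)×(n/2)} and vectors b1, b2 ∈ ℝ^{n/2} such that, with A = [[0, M], [−Mᵀ, 0]], b = (b1, −b2), f(x,y) = xᵀMy + b1ᵀx + b2ᵀy, M invertible, ‖A‖_σ ≤ L, ‖A⁻¹b‖ = D, and saddle point (x*, y*) = −A⁻¹b, the time-varying extragradient iterates defined by z^0 = 0 and z^{t+1} = z^t − η_t·F(z^t − η_t F(z^t)) with F(z) = Az + b satisfy Gap_f^Z(x^T, y^T) ≥ LD²/(4√T), where z^T = (x^T, y^T) and Z = B̄(x*, D) × B̄(y*, D). -/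
open Matrix

/-- The Euclidean norm of a real vector. -/
noncomputable def enorm {ι : Type*} [Fintype ι] (v : ι → ℝ) : ℝ := Real.sqrt (∑ i, v i ^ 2)

/-- The primal-dual gap of `(x, y)` for the bilinear function `f(x,y) = xᵀMy + b1ᵀx + b2ᵀy`
with respect to the product of closed balls of radius `D` around the saddle point `(x*, y*)`. -/
noncomputable def gapBilin {m : ℕ} (M : Matrix (Fin m) (Fin m) ℝ) (b1 b2 : Fin m → ℝ)
    (xstar ystar : Fin m → ℝ) (D : ℝ) (x y : Fin m → ℝ) : ℝ :=
  sSup ((fun y' => x ⬝ᵥ (M *ᵥ y') + b1 ⬝ᵥ x + b2 ⬝ᵥ y') '' {y' | _root_.enorm (y' - ystar) ≤ D})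
    - sInf ((fun x' => x' ⬝ᵥ (M *ᵥ y) + b1 ⬝ᵥ x' + b2 ⬝ᵥ y) '' {x' | _root_.enorm (x' - xstar) ≤ D})

/-- The auxiliary scalar recursion followed by the extragradient iterates on the
hard bilinear instance. -/
noncomputable def egSeq (D : ℝ) (s : ℕ → ℝ) : ℕ → ℝ × ℝ
  | 0 => (D, 0)
  | t + 1 => ((1 - s t ^ 2) * (egSeq D s t).1 - s t * (egSeq D s t).2,
              s t * (egSeq D s t).1 + (1 - s t ^ 2) * (egSeq D s t).2)

lemma egSeq_zero (D : ℝ) (s : ℕ → ℝ) : egSeq D s 0 = (D, 0) := rfl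

lemma egSeq_succ (D : ℝ) (s : ℕ → ℝ) (t : ℕ) :
    egSeq D s (t + 1) = ((1 - s t ^ 2) * (egSeq D s t).1 - s t * (egSeq D s t).2,
      s t * (egSeq D s t).1 + (1 - s t ^ 2) * (egSeq D s t).2) := rfl

lemma egSeq_grow (D : ℝ) (s : ℕ → ℝ) (T : ℕ)
    (hsbound : ∀ t, s t ^ 2 ≤ 1 / (4 * (T:ℝ)))
    (hfrac : 0 ≤ 1 - 1 / (4 * (T:ℝ))) :
    ∀ t, (1 - 1 / (4 * (T:ℝ)))^t * D^2 ≤ (egSeq D s t).1 ^ 2 + (egSeq D s t).2 ^ 2 := by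
  intro t
  induction t with
  | zero => simp [egSeq_zero]
  | succ t ih =>
    set u := (egSeq D s t).1 with hu
    set v := (egSeq D s t).2 with hv
    have hexp : (egSeq D s (t+1)).1 ^ 2 + (egSeq D s (t+1)).2 ^ 2
        = ((1 - s t ^ 2)^2 + s t ^ 2) * (u^2 + v^2) := by
      rw [egSeq_succ, ← hu, ← hv]; ring
    have hfac : 1 - 1 / (4 * (T:ℝ)) ≤ (1 - s t ^ 2)^2 + s t ^ 2 := by
      nlinarith [hsbound t, sq_nonneg (s t), sq_nonneg (s t ^ 2)]
    have huv0 : 0 ≤ u^2 + v^2 := by positivity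
    calc (1 - 1 / (4 * (T:ℝ)))^(t+1) * D^2
        = (1 - 1 / (4 * (T:ℝ))) * ((1 - 1 / (4 * (T:ℝ)))^t * D^2) := by ring
      _ ≤ (1 - 1 / (4 * (T:ℝ))) * (u^2 + v^2) := mul_le_mul_of_nonneg_left ih hfrac
      _ ≤ ((1 - s t ^ 2)^2 + s t ^ 2) * (u^2 + v^2) := mul_le_mul_of_nonneg_right hfac huv0
      _ = (egSeq D s (t+1)).1 ^ 2 + (egSeq D s (t+1)).2 ^ 2 := hexp.symm

lemma half_le_abs_add_abs (T : ℕ) (hT : 2 ≤ T) (D a bb : ℝ) (hD : 0 < D)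
    (h4 : (1 - 1 / (4 * (T:ℝ)))^T * D^2 ≤ a^2 + bb^2) : D / 2 ≤ |a| + |bb| := by
  have h2T : (2:ℝ) ≤ T := by exact_mod_cast hT
  have hT0 : (0:ℝ) < T := by linarith
  have hfrac : 0 ≤ 1 - 1 / (4 * (T:ℝ)) := by
    have h6 : 1 / (4 * (T:ℝ)) ≤ 1 / 4 := by
      apply div_le_div_of_nonneg_left (by norm_num) (by norm_num) (by linarith)
    linarith
  have hbern : (3/4 : ℝ) * D^2 ≤ a^2 + bb^2 := by
    have h1 := one_add_mul_le_pow (a := -(1 / (4 * (T:ℝ)))) (by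
      have : 0 ≤ 1 / (4 * (T:ℝ)) := by positivity
      nlinarith [hfrac]) T
    have h2 : 1 + (T:ℝ) * (-(1 / (4 * (T:ℝ)))) = 3/4 := by
      field_simp
      ring
    rw [h2] at h1
    have h3 : (1 + -(1 / (4 * (T:ℝ)))) = 1 - 1 / (4 * (T:ℝ)) := by ring
    rw [h3] at h1
    nlinarith [sq_nonneg D, mul_le_mul_of_nonneg_right h1 (sq_nonneg D)]
  have h5 : (D/2)^2 ≤ a^2 + bb^2 := by nlinarith
  nlinarith [abs_nonneg a, abs_nonneg bb, sq_abs a, sq_abs bb,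
    mul_nonneg (abs_nonneg a) (abs_nonneg bb)]

lemma enorm_smul_single {m : ℕ} [NeZero m] (c : ℝ) :
    _root_.enorm (c • (Pi.single (0 : Fin m) (1:ℝ) : Fin m → ℝ)) = |c| := by
  unfold _root_.enorm
  have : ∀ i : Fin m, (c • (Pi.single (0 : Fin m) (1:ℝ) : Fin m → ℝ)) i ^ 2
      = (if i = 0 then c ^ 2 else 0) := by
    intro i
    by_cases h : i = 0 <;> simp [Pi.single_apply, h]
  rw [Finset.sum_congr rfl fun i _ => this i]
  simp [Finset.sum_ite_eq', Real.sqrt_sq_eq_abs]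

lemma abs_apply_le_enorm {m : ℕ} (v : Fin m → ℝ) (i : Fin m) : |v i| ≤ _root_.enorm v := by
  rw [← Real.sqrt_sq_eq_abs]
  apply Real.sqrt_le_sqrt
  exact Finset.single_le_sum (f := fun j => v j ^ 2) (fun j _ => sq_nonneg _) (Finset.mem_univ i)

/-- Lower bound for the last iterate of extragradient with arbitrary time-varying step sizes
`η_t ∈ (0, 1/L)`: there is a bilinear hard instance, given by `A = [[0, M], [−Mᵀ, 0]]`,
`b = (b1, −b2)`, `M` invertible, `‖A‖_σ ≤ L`, `‖A⁻¹b‖ = D`, and saddle point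
`(x*, y*) = −A⁻¹b`, on which the iterates `z⁰ = 0`,
`z^{t+1} = z^t − η_t F(z^t − η_t F(z^t))` with `F(z) = Az + b` satisfy
`Gap_f^Z(x^T, y^T) ≥ LD²/(4√T)`, where `Z = B̄(x*, D) × B̄(y*, D)`. -/
theorem eg_timevarying_lower_bound
    (n : ℕ) (hn : 2 ≤ n) (hneven : Even n)
    (L D : ℝ) (hL : 0 < L) (hD : 0 < D)
    (T : ℕ) (hT : 2 ≤ T)
    (η : ℕ → ℝ) (hη : ∀ t : ℕ, η t ∈ Set.Ioo 0 (1 / L)) :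
    ∃ (M : Matrix (Fin (n / 2)) (Fin (n / 2)) ℝ) (b1 b2 : Fin (n / 2) → ℝ),
      IsUnit M ∧
      ∀ (A : Matrix (Fin (n / 2) ⊕ Fin (n / 2)) (Fin (n / 2) ⊕ Fin (n / 2)) ℝ)
        (b zstar : Fin (n / 2) ⊕ Fin (n / 2) → ℝ),
        A = Matrix.fromBlocks 0 M (-Mᵀ) 0 →
        b = Sum.elim b1 (-b2) →
        zstar = -(A⁻¹ *ᵥ b) →
        specNorm A ≤ L ∧ _root_.enorm (A⁻¹ *ᵥ b) = D ∧
        ∀ z : ℕ → (Fin (n / 2) ⊕ Fin (n / 2)) → ℝ,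
          z 0 = 0 →
          (∀ t : ℕ, z (t + 1)
              = z t - η t • (A *ᵥ (z t - η t • (A *ᵥ z t + b)) + b)) →
          L * D ^ 2 / (4 * Real.sqrt T)
            ≤ gapBilin M b1 b2 (fun i => zstar (Sum.inl i)) (fun i => zstar (Sum.inr i)) D
                (fun i => z T (Sum.inl i)) (fun i => z T (Sum.inr i)) := by
  haveI : NeZero (n / 2) := ⟨by omega⟩
  have hT1 : (1:ℝ) ≤ (T:ℝ) := by exact_mod_cast Nat.one_le_of_lt hT
  have hT0 : (0:ℝ) < (T:ℝ) := by linarith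
  have hsqT1 : 1 ≤ Real.sqrt T := by
    rw [show (1:ℝ) = Real.sqrt 1 from (Real.sqrt_one).symm]
    exact Real.sqrt_le_sqrt hT1
  have hsqT0 : 0 < Real.sqrt T := by linarith
  set γ : ℝ := L / (2 * Real.sqrt T) with hγdef
  have hγ0 : 0 < γ := by positivity
  have hγL : γ ≤ L := by
    rw [hγdef]
    apply div_le_self hL.le
    linarith
  set e0 : Fin (n / 2) → ℝ := Pi.single (0 : Fin (n / 2)) (1:ℝ) with he0
  refine ⟨γ • 1, 0, (γ * D) • e0, ?_, ?_⟩
  · refine isUnit_iff_exists.mpr ⟨γ⁻¹ • (1 : Matrix (Fin (n/2)) (Fin (n/2)) ℝ), ?_, ?_⟩ <;>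
      rw [Matrix.smul_mul, Matrix.mul_smul, smul_smul] <;>
      simp [mul_inv_cancel₀ hγ0.ne', inv_mul_cancel₀ hγ0.ne']
  intro A b zstar hA hb hzstar0
  have hMT : (γ • (1 : Matrix (Fin (n/2)) (Fin (n/2)) ℝ))ᵀ = γ • 1 := by
    rw [transpose_smul, transpose_one]
  have hA' : A = fromBlocks 0 (γ • 1) (-(γ • 1)) 0 := by rw [hA, hMT]
  -- action of A on W-shaped vectors
  have hact : ∀ u v : ℝ, A *ᵥ Sum.elim (u • e0) (v • e0)
      = Sum.elim ((γ*v) • e0) ((-(γ*u)) • e0) := by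
    intro u v
    rw [hA']
    simp [fromBlocks_mulVec, smul_mulVec, neg_mulVec, smul_smul]
  -- inverse of A
  have hAinv : A⁻¹ = fromBlocks 0 (-(γ⁻¹ • 1)) (γ⁻¹ • 1) 0 := by
    apply inv_eq_right_inv
    rw [hA', fromBlocks_multiply]
    simp [Matrix.smul_mul, Matrix.mul_smul, smul_smul, mul_inv_cancel₀ hγ0.ne',
      inv_mul_cancel₀ hγ0.ne', ← fromBlocks_one]
  have hb' : b = Sum.elim (0 : Fin (n/2) → ℝ) (-((γ * D) • e0)) := by
    rw [hb]
  have hAb : A⁻¹ *ᵥ b = Sum.elim (D • e0) 0 := by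
    rw [hAinv, hb', fromBlocks_mulVec]
    funext p
    cases p <;>
      simp [smul_mulVec, neg_mulVec, smul_smul, inv_mul_cancel_left₀ hγ0.ne'] <;>
      ring_nf <;>
      simp [mul_comm, mul_assoc, inv_mul_cancel₀ hγ0.ne']
  have hzstar : zstar = Sum.elim ((-D) • e0) ((0:ℝ) • e0) := by
    rw [hzstar0, hAb]
    funext p
    cases p <;> simp
  -- stationarity
  have hstat : A *ᵥ zstar + b = 0 := by
    rw [hzstar, hact, hb']
    funext p
    cases p <;> simp [mul_comm]
  -- spectral norm bound
  have hspec : specNorm A ≤ L := by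
    unfold specNorm
    rw [hA']
    apply ContinuousLinearMap.opNorm_le_bound _ (hγ0.le.trans hγL)
    intro x
    rw [EuclideanSpace.norm_eq, EuclideanSpace.norm_eq]
    have hv : ∀ p, (Matrix.toEuclideanCLM (𝕜 := ℝ)
        (fromBlocks 0 (γ • (1 : Matrix (Fin (n/2)) (Fin (n/2)) ℝ)) (-(γ • 1)) 0)) x p
        = ((fromBlocks 0 (γ • (1 : Matrix (Fin (n/2)) (Fin (n/2)) ℝ)) (-(γ • 1)) 0)
            *ᵥ (fun q => x q)) p := by
      intro p
      exact congrFun (Matrix.ofLp_toEuclideanCLM (𝕜 := ℝ) _ x) p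
    simp only [hv, fromBlocks_mulVec, smul_mulVec, neg_mulVec,
      one_mulVec, zero_mulVec, zero_add, add_zero, Fintype.sum_sum_type,
      Sum.elim_inl, Sum.elim_inr, Pi.smul_apply, Pi.neg_apply, smul_eq_mul, norm_neg,
      norm_mul, Real.norm_eq_abs, mul_pow, sq_abs, even_two, Even.neg_pow]
    simp only [Function.comp]
    rw [← Finset.mul_sum, ← Finset.mul_sum, ← mul_add, add_comm (∑ i, x (Sum.inr i)^2)]
    rw [Real.sqrt_mul (by positivity), Real.sqrt_sq_eq_abs, abs_of_nonneg hγ0.le]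
    have h1 : Real.sqrt (∑ i, x (Sum.inl i) ^ 2 + ∑ i, x (Sum.inr i) ^ 2) ≥ 0 :=
      Real.sqrt_nonneg _
    nlinarith [mul_le_mul_of_nonneg_right hγL h1]
  have hnorm : _root_.enorm (A⁻¹ *ᵥ b) = D := by
    rw [hAb]
    unfold _root_.enorm
    rw [Fintype.sum_sum_type]
    have : ∀ i : Fin (n/2), (Sum.elim (D • e0) (0 : Fin (n/2) → ℝ)) (Sum.inl i) ^ 2
        = (if i = 0 then D ^ 2 else 0) := by
      intro i
      by_cases h : i = 0 <;> simp [he0, Pi.single_apply, h]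
    rw [Finset.sum_congr rfl fun i _ => this i]
    simp [Finset.sum_ite_eq']
    exact Real.sqrt_sq hD.le
  refine ⟨hspec, hnorm, ?_⟩
  intro z hz0 hzrec
  set s : ℕ → ℝ := fun t => η t * γ with hs
  -- F applied to W-shaped shifted vectors
  have hFz : ∀ u v : ℝ, A *ᵥ (fun p => zstar p + Sum.elim (u • e0) (v • e0) p) + b
      = Sum.elim ((γ*v) • e0) ((-(γ*u)) • e0) := by
    intro u v
    have : (fun p => zstar p + Sum.elim (u • e0) (v • e0) p)
        = zstar + Sum.elim (u • e0) (v • e0) := rfl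
    rw [this, mulVec_add]
    rw [show A *ᵥ zstar + A *ᵥ Sum.elim (u • e0) (v • e0) + b
        = (A *ᵥ zstar + b) + A *ᵥ Sum.elim (u • e0) (v • e0) by ring]
    rw [hstat, hact, zero_add]
  -- main induction
  have key : ∀ t, z t = fun p => zstar p
      + Sum.elim ((egSeq D s t).1 • e0) ((egSeq D s t).2 • e0) p := by
    intro t
    induction t with
    | zero =>
      rw [hz0, hzstar]
      funext p
      cases p <;> simp [egSeq_zero]
    | succ t ih =>
      set u := (egSeq D s t).1
      set v := (egSeq D s t).2
      have h1 : A *ᵥ z t + b = Sum.elim ((γ*v) • e0) ((-(γ*u)) • e0) := by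
        rw [ih]; exact hFz u v
      have h2 : z t - η t • (A *ᵥ z t + b)
          = fun p => zstar p + Sum.elim ((u - η t * (γ*v)) • e0)
              ((v - η t * (-(γ*u))) • e0) p := by
        rw [h1, ih]
        funext p
        cases p <;> simp <;> ring
      have h3 : A *ᵥ (z t - η t • (A *ᵥ z t + b)) + b
          = Sum.elim ((γ * (v - η t * (-(γ*u)))) • e0)
              ((-(γ * (u - η t * (γ*v)))) • e0) := by
        rw [h2]; exact hFz _ _
      rw [hzrec t, h3, ih]
      funext p
      have hseq1 : (egSeq D s (t+1)).1 = (1 - s t ^ 2) * u - s t * v := by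
        rw [egSeq_succ]
      have hseq2 : (egSeq D s (t+1)).2 = s t * u + (1 - s t ^ 2) * v := by
        rw [egSeq_succ]
      cases p <;> simp only [hseq1, hseq2] <;> simp [hs] <;> ring
  obtain ⟨a, ha⟩ : ∃ a, a = (egSeq D s T).1 := ⟨_, rfl⟩
  obtain ⟨bb, hbb⟩ : ∃ bb, bb = (egSeq D s T).2 := ⟨_, rfl⟩
  -- the iterates at time T
  have hxT : (fun i => z T (Sum.inl i)) = (a - D) • e0 := by
    funext i
    rw [key T]
    simp only [hzstar, ← ha, Sum.elim_inl, Pi.smul_apply, smul_eq_mul, sub_smul, Pi.sub_apply]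
    ring
  have hyT : (fun i => z T (Sum.inr i)) = bb • e0 := by
    funext i
    rw [key T]
    simp only [hzstar, ← hbb, Sum.elim_inr, Pi.smul_apply, smul_eq_mul, Pi.add_apply]
    simp
  have hxstar : (fun i => zstar (Sum.inl i)) = (-D) • e0 := by
    funext i; rw [hzstar]; simp
  have hystar : (fun i => zstar (Sum.inr i)) = (0 : Fin (n/2) → ℝ) := by
    funext i; rw [hzstar]; simp
  rw [hxT, hyT, hxstar, hystar]
  unfold gapBilin
  -- value functions
  have val1 : ∀ y' : Fin (n/2) → ℝ,
      ((a - D) • e0) ⬝ᵥ ((γ • 1) *ᵥ y') + (0 : Fin (n/2) → ℝ) ⬝ᵥ ((a - D) • e0)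
        + ((γ * D) • e0) ⬝ᵥ y' = γ * a * y' 0 := by
    intro y'
    rw [smul_mulVec, one_mulVec]
    simp [he0, smul_dotProduct, dotProduct_smul, single_dotProduct, smul_eq_mul]
    ring
  have val2 : ∀ x' : Fin (n/2) → ℝ,
      x' ⬝ᵥ ((γ • 1) *ᵥ (bb • e0)) + (0 : Fin (n/2) → ℝ) ⬝ᵥ x'
        + ((γ * D) • e0) ⬝ᵥ (bb • e0) = γ * bb * (x' 0 + D) := by
    intro x'
    rw [smul_mulVec, one_mulVec]
    simp [he0, smul_dotProduct, dotProduct_smul, dotProduct_single, single_dotProduct,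
      smul_eq_mul, Pi.single_eq_same]
    ring
  -- the sup part
  have hsup : γ * D * |a| ≤ sSup ((fun y' => ((a - D) • e0) ⬝ᵥ ((γ • 1) *ᵥ y')
      + (0 : Fin (n/2) → ℝ) ⬝ᵥ ((a - D) • e0) + ((γ * D) • e0) ⬝ᵥ y')
      '' {y' | _root_.enorm (y' - 0) ≤ D}) := by
    apply le_csSup
    · refine ⟨γ * |a| * D, ?_⟩
      rintro r ⟨y', hy', rfl⟩
      simp only [val1]
      have h0 : |y' 0| ≤ D := by
        have := abs_apply_le_enorm y' 0
        simp only [Set.mem_setOf_eq, sub_zero] at hy'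
        linarith
      calc γ * a * y' 0 ≤ |γ * a * y' 0| := le_abs_self _
        _ = γ * |a| * |y' 0| := by rw [abs_mul, abs_mul, abs_of_nonneg hγ0.le]
        _ ≤ γ * |a| * D := by
            apply mul_le_mul_of_nonneg_left h0 (by positivity)
    · rcases le_or_gt 0 a with h | h
      · refine ⟨D • e0, ?_, ?_⟩
        · simp only [Set.mem_setOf_eq, sub_zero, he0, enorm_smul_single]
          rw [abs_of_nonneg hD.le]
        · simp only [val1]
          rw [abs_of_nonneg h]
          simp [he0, Pi.single_eq_same]
          ring
      · refine ⟨(-D) • e0, ?_, ?_⟩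
        · simp only [Set.mem_setOf_eq, sub_zero, he0, enorm_smul_single]
          rw [abs_neg, abs_of_nonneg hD.le]
        · simp only [val1]
          rw [abs_of_neg h]
          simp [he0, Pi.single_eq_same]
          ring
  -- the inf part
  have hinf : sInf ((fun x' => x' ⬝ᵥ ((γ • 1) *ᵥ (bb • e0))
      + (0 : Fin (n/2) → ℝ) ⬝ᵥ x' + ((γ * D) • e0) ⬝ᵥ (bb • e0))
      '' {x' | _root_.enorm (x' - (-D) • e0) ≤ D}) ≤ -(γ * D * |bb|) := by
    apply csInf_le
    · refine ⟨-(γ * |bb| * D), ?_⟩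
      rintro r ⟨x', hx', rfl⟩
      simp only [val2]
      have h0 : |x' 0 + D| ≤ D := by
        have h1 := abs_apply_le_enorm (x' - (-D) • e0) 0
        simp only [Set.mem_setOf_eq] at hx'
        have h2 : (x' - (-D) • e0) 0 = x' 0 + D := by
          simp [he0, Pi.single_eq_same]
        rw [h2] at h1
        linarith
      have h3 : |γ * bb * (x' 0 + D)| ≤ γ * |bb| * D := by
        rw [abs_mul, abs_mul, abs_of_nonneg hγ0.le]
        apply mul_le_mul_of_nonneg_left h0 (by positivity)
      have h4 := neg_abs_le (γ * bb * (x' 0 + D))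
      linarith
    · rcases le_or_gt 0 bb with h | h
      · refine ⟨(-(2*D)) • e0, ?_, ?_⟩
        · have h5 : ((-(2*D)) • e0 - (-D) • e0) = (-D) • e0 := by
            funext i
            simp only [Pi.sub_apply, Pi.smul_apply, smul_eq_mul]
            ring
          rw [Set.mem_setOf_eq, h5]
          simp only [Set.mem_setOf_eq, h5, he0, enorm_smul_single, abs_neg,
            abs_of_nonneg hD.le, le_refl]
        · simp only [val2]
          rw [abs_of_nonneg h]
          simp [he0, Pi.single_eq_same]
          ring
      · refine ⟨(0:ℝ) • e0, ?_, ?_⟩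
        · have h5 : ((0:ℝ) • e0 - (-D) • e0) = D • e0 := by
            funext i
            simp only [Pi.sub_apply, Pi.smul_apply, smul_eq_mul]
            ring
          rw [Set.mem_setOf_eq, h5]
          simp only [Set.mem_setOf_eq, h5, he0, enorm_smul_single,
            abs_of_nonneg hD.le, le_refl]
        · simp only [val2]
          rw [abs_of_neg h]
          simp [he0, Pi.single_eq_same]
          ring
  -- step size bound
  have hsbound : ∀ t, s t ^ 2 ≤ 1 / (4 * (T:ℝ)) := by
    intro t
    obtain ⟨hη0, hη1⟩ := hη t
    have hst0 : 0 ≤ s t := by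
      rw [hs]; positivity
    have hst : s t ≤ 1 / (2 * Real.sqrt T) := by
      rw [hs, hγdef]
      calc η t * (L / (2 * Real.sqrt T)) ≤ (1/L) * (L / (2 * Real.sqrt T)) := by
            apply mul_le_mul_of_nonneg_right hη1.le (by positivity)
        _ = 1 / (2 * Real.sqrt T) := by field_simp
    have h2 : s t ^ 2 ≤ (1 / (2 * Real.sqrt T)) ^ 2 := by
      apply pow_le_pow_left₀ hst0 hst
    have h3 : (1 / (2 * Real.sqrt T)) ^ 2 = 1 / (4 * (T:ℝ)) := by
      rw [div_pow, mul_pow, Real.sq_sqrt hT0.le]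
      norm_num
    linarith
  have hfrac : 0 ≤ 1 - 1 / (4 * (T:ℝ)) := by
    have : 1 / (4 * (T:ℝ)) ≤ 1 / 4 := by
      apply div_le_div_of_nonneg_left (by norm_num) (by norm_num) (by linarith)
    linarith
  -- norm growth induction
  have hgrow : ∀ t, (1 - 1 / (4 * (T:ℝ)))^t * D^2
      ≤ (egSeq D s t).1 ^ 2 + (egSeq D s t).2 ^ 2 := egSeq_grow D s T hsbound hfrac
  have habsum : D / 2 ≤ |a| + |bb| :=
    half_le_abs_add_abs T hT D a bb hD (by rw [ha, hbb]; exact hgrow T)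
  -- final arithmetic
  have h1 : L * D ^ 2 / (4 * Real.sqrt T) = γ * D * (D / 2) := by
    rw [hγdef]
    field_simp
    ring
  have h2 : γ * D * (D/2) ≤ γ * D * (|a| + |bb|) :=
    mul_le_mul_of_nonneg_left habsum (mul_nonneg hγ0.le hD.le)
  have h3 : γ * D * |a| - -(γ * D * |bb|) ≤ _ := sub_le_sub hsup hinf
  rw [sub_neg_eq_add] at h3
  calc L * D ^ 2 / (4 * Real.sqrt T) = γ * D * (D / 2) := h1
    _ ≤ γ * D * (|a| + |bb|) := h2
    _ = γ * D * |a| + γ * D * |bb| := by ring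
    _ ≤ _ := h3
end
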